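/- Let 𝔫 be a finite-dimensional nilpotent Lie algebra over ℂ and let ρ : 𝔫 → M_n(ℂ) be a Lie algebra homomorphism. Let x, y ∈ 𝔫, and let ρ(x) = S_x + N_x and ρ(y) = S_y + N_y be Jordan–Chevalley decompositions. Then S_x + S_y is the semisimple part of ρ(x+y); that is, S_x + S_y is diagonalizable, commutes with ρ(x+y), and ρ(x+y) − (S_x + S_y) is nilpotent. -/

import Mathlib

/-- A complex square matrix is diagonalizable (semisimple) if it is conjugate to a
diagonal matrix. -/
def Matrix.IsDiagonalizable {n : ℕ} (A : Matrix (Fin n) (Fin n) ℂ) : Prop :=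
  ∃ P : Matrix (Fin n) (Fin n) ℂ, IsUnit P ∧ (P * A * P⁻¹).IsDiag

open Matrix Module

/-- A matrix with an eigenbasis is diagonalizable. -/
lemma aux_diag_of_eigenbasis {n : ℕ} (A : Matrix (Fin n) (Fin n) ℂ)
    (b : Basis (Fin n) ℂ (Fin n → ℂ)) (d : Fin n → ℂ)
    (h : ∀ i, A *ᵥ b i = d i • b i) : A.IsDiagonalizable := by
  classical
  set Q : Matrix (Fin n) (Fin n) ℂ := (Pi.basisFun ℂ (Fin n)).toMatrix ⇑b with hQ
  have hQunit : IsUnit Q := by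
    have := (Pi.basisFun ℂ (Fin n)).invertibleToMatrix b
    exact isUnit_of_invertible Q
  have hdet : IsUnit Q.det := (Matrix.isUnit_iff_isUnit_det Q).mp hQunit
  have key : A * Q = Q * Matrix.diagonal d := by
    ext i j
    have h1 : (A * Q) i j = (A *ᵥ b j) i := by
      simp [Matrix.mul_apply, Matrix.mulVec, Q, Basis.toMatrix, dotProduct]
    have h2 : (Q * Matrix.diagonal d) i j = d j * b j i := by
      simp [Matrix.mul_apply, Matrix.diagonal, Q, Basis.toMatrix, mul_comm]
    rw [h1, h2, h]
    simp [mul_comm]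
  refine ⟨Q⁻¹, ?_, ?_⟩
  · exact (Matrix.isUnit_iff_isUnit_det _).mpr (Matrix.isUnit_nonsing_inv_det Q hdet)
  · have h3 : Q⁻¹⁻¹ = Q := Matrix.nonsing_inv_nonsing_inv Q hdet
    rw [h3]
    have : Q⁻¹ * A * Q = Matrix.diagonal d := by
      rw [Matrix.mul_assoc, key, ← Matrix.mul_assoc, Matrix.nonsing_inv_mul Q hdet, Matrix.one_mul]
    rw [this]
    exact Matrix.isDiag_diagonal d

/-- A diagonalizable matrix gives a semisimple endomorphism. -/
lemma aux_isSemisimple_of_isDiagonalizable {n : ℕ} {A : Matrix (Fin n) (Fin n) ℂ}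
    (hA : A.IsDiagonalizable) :
    Module.End.IsSemisimple (Matrix.toLin' A : Module.End ℂ (Fin n → ℂ)) := by
  classical
  obtain ⟨P, hP, hD⟩ := hA
  have hdet : IsUnit P.det := (Matrix.isUnit_iff_isUnit_det P).mp hP
  set d : Fin n → ℂ := (P * A * P⁻¹).diag with hd
  have hdiag : Matrix.diagonal d = P * A * P⁻¹ := hD.diagonal_diag
  have hPA : P * A = Matrix.diagonal d * P := by
    rw [hdiag]
    calc P * A = P * A * (P⁻¹ * P) := by rw [Matrix.nonsing_inv_mul P hdet]; simp
      _ = P * A * P⁻¹ * P := by noncomm_ring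
  set e : (Fin n → ℂ) ≃ₗ[ℂ] (Fin n → ℂ) := LinearEquiv.ofLinear
    (Matrix.toLin' P) (Matrix.toLin' P⁻¹)
    (by rw [← Matrix.toLin'_mul, Matrix.mul_nonsing_inv P hdet, Matrix.toLin'_one])
    (by rw [← Matrix.toLin'_mul, Matrix.nonsing_inv_mul P hdet, Matrix.toLin'_one]) with he
  have hcomm : (e : (Fin n → ℂ) →ₗ[ℂ] (Fin n → ℂ)) ∘ₗ Matrix.toLin' A
      = (Matrix.toLin' (Matrix.diagonal d) : Module.End ℂ (Fin n → ℂ))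
        ∘ₗ (e : (Fin n → ℂ) →ₗ[ℂ] (Fin n → ℂ)) := by
    show Matrix.toLin' P ∘ₗ Matrix.toLin' A = Matrix.toLin' (Matrix.diagonal d) ∘ₗ Matrix.toLin' P
    rw [← Matrix.toLin'_mul, ← Matrix.toLin'_mul, hPA]
  rw [LinearEquiv.isSemisimple_iff (Matrix.toLin' A)
    (Matrix.toLin' (Matrix.diagonal d)) e hcomm]
  set p : Polynomial ℂ := ∏ μ ∈ Finset.image d Finset.univ, (Polynomial.X - Polynomial.C μ) with hp
  have hsf : Squarefree p := by
    refine Polynomial.Separable.squarefree ?_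
    exact Polynomial.separable_prod_X_sub_C_iff'.mpr (fun i hi j hj hij => hij)
  apply Module.End.isSemisimple_of_squarefree_aeval_eq_zero hsf
  have haevald : Polynomial.aeval (Matrix.diagonal d) p = 0 := by
    have : Polynomial.aeval (Matrix.diagonal d) p
        = Matrix.diagonal (fun i => Polynomial.eval (d i) p) := by
      rw [show Matrix.diagonal d = Matrix.diagonalAlgHom ℂ d from rfl,
        Polynomial.aeval_algHom_apply]
      have haux : (Polynomial.aeval d) p = fun i => Polynomial.eval (d i) p := by
        funext i
        show (Pi.evalAlgHom ℂ (fun _ => ℂ) i) ((Polynomial.aeval d) p) = _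
        rw [← Polynomial.aeval_algHom_apply]
        simp [Polynomial.aeval_def, Polynomial.eval₂_eq_eval_map]
      rw [haux]
      rfl
    rw [this]
    have hz : ∀ i, Polynomial.eval (d i) p = 0 := by
      intro i
      rw [hp]
      simp only [Polynomial.eval_prod, Polynomial.eval_sub, Polynomial.eval_X, Polynomial.eval_C]
      apply Finset.prod_eq_zero (Finset.mem_image_of_mem d (Finset.mem_univ i))
      ring
    simp [hz]
  have : Matrix.toLin' (Matrix.diagonal d)
      = Matrix.toLinAlgEquiv'.toAlgHom (Matrix.diagonal d) := rfl
  rw [this, Polynomial.aeval_algHom_apply, haevald]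
  simp

open Matrix Module LieModule

attribute [local instance 100] LieRing.ofAssociativeRing

/-- Let `ρ` be a matrix representation of a finite-dimensional nilpotent complex Lie
algebra `𝔫`, and let `ρ x = Sx + Nx`, `ρ y = Sy + Ny` be Jordan–Chevalley
decompositions.  Then `Sx + Sy` is the semisimple part of `ρ (x + y)`: it is
diagonalizable, commutes with `ρ (x + y)`, and `ρ (x + y) - (Sx + Sy)` is nilpotent. -/
theorem semisimplePart_add {L : Type*} [LieRing L] [LieAlgebra ℂ L]
    [FiniteDimensional ℂ L] [LieRing.IsNilpotent L] {n : ℕ}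
    (ρ : L →ₗ⁅ℂ⁆ Matrix (Fin n) (Fin n) ℂ) (x y : L)
    (Sx Nx Sy Ny : Matrix (Fin n) (Fin n) ℂ)
    (hx : ρ x = Sx + Nx) (hSx : Sx.IsDiagonalizable) (hNx : IsNilpotent Nx)
    (hSNx : Sx * Nx = Nx * Sx)
    (hy : ρ y = Sy + Ny) (hSy : Sy.IsDiagonalizable) (hNy : IsNilpotent Ny)
    (hSNy : Sy * Ny = Ny * Sy) :
    (Sx + Sy).IsDiagonalizable ∧
      (Sx + Sy) * ρ (x + y) = ρ (x + y) * (Sx + Sy) ∧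
      IsNilpotent (ρ (x + y) - (Sx + Sy)) := by
  classical
  set V : Type := Fin n → ℂ with hV
  set f : L →ₗ⁅ℂ⁆ Module.End ℂ V :=
    ((Matrix.toLinAlgEquiv' :
        Matrix (Fin n) (Fin n) ℂ ≃ₐ[ℂ] Module.End ℂ (Fin n → ℂ)).toAlgHom.toLieHom).comp ρ with hf
  letI : LieRingModule L V := LieRingModule.compLieHom V f
  letI : LieModule ℂ L V := LieModule.compLieHom V f
  have htoEnd : ∀ z : L, toEnd ℂ L V z = Matrix.toLin' (ρ z) := fun z => by ext m; rfl
  have hlie : ∀ (z : L) (m : V), ⁅z, m⁆ = Matrix.toLin' (ρ z) m := fun z m => rfl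
  -- scalar action of semisimple parts on weight spaces
  have hscalar : ∀ (z : L) (S N : Matrix (Fin n) (Fin n) ℂ), ρ z = S + N →
      S.IsDiagonalizable → IsNilpotent N → S * N = N * S →
      ∀ (χ : Weight ℂ L V) (m : V), m ∈ genWeightSpace V (χ : L → ℂ) →
      Matrix.toLin' S m = χ z • m := by
    intro z S N hz hS hN hSN χ m hm
    have hmem : m ∈ (toEnd ℂ L V z).maxGenEigenspace ((χ : L → ℂ) z) := by
      have h1 := genWeightSpace_le_genWeightSpaceOf V z (χ : L → ℂ) hm
      rw [mem_genWeightSpaceOf] at h1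
      exact (Module.End.mem_maxGenEigenspace _ _ _).mpr h1
    rw [htoEnd z] at hmem
    have hcm : Commute S (ρ z) := by rw [hz]; exact (Commute.refl S).add_right hSN
    have hcomm : Commute (Matrix.toLin' (ρ z)) (Matrix.toLin' S) := by
      have := hcm.symm.map
        (Matrix.toLinAlgEquiv'.toAlgHom : Matrix (Fin n) (Fin n) ℂ →ₐ[ℂ] Module.End ℂ (Fin n → ℂ))
      exact this
    have hss : Module.End.IsFinitelySemisimple (Matrix.toLin' S : Module.End ℂ (Fin n → ℂ)) :=
      (aux_isSemisimple_of_isDiagonalizable hS).isFinitelySemisimple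
    have hnil : IsNilpotent
        ((Matrix.toLin' (ρ z) : Module.End ℂ (Fin n → ℂ)) - Matrix.toLin' S) := by
      have hsub : ρ z - S = N := by rw [hz, add_sub_cancel_left]
      have : (Matrix.toLin' (ρ z) : Module.End ℂ (Fin n → ℂ)) - Matrix.toLin' S
          = Matrix.toLinAlgEquiv'.toAlgHom N := by
        rw [← hsub]; simp [map_sub]; rfl
      rw [this]
      exact hN.map _
    exact Module.End.apply_eq_of_mem_of_comm_of_isFinitelySemisimple_of_isNil hmem hcomm hss hnil
  have hscx := hscalar x Sx Nx hx hSx hNx hSNx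
  have hscy := hscalar y Sy Ny hy hSy hNy hSNy
  -- spanning
  have hspan : ⨆ χ : Weight ℂ L V,
      ((genWeightSpace V (χ : L → ℂ) : LieSubmodule ℂ L V) : Submodule ℂ V) = ⊤ := by
    have h1 := iSup_genWeightSpace_eq_top' ℂ L V
    rw [← LieSubmodule.iSup_toSubmodule, h1, LieSubmodule.top_toSubmodule]
  -- extensionality from the weight space decomposition
  have hext : ∀ g h : Module.End ℂ V,
      (∀ (χ : Weight ℂ L V) (m : V), m ∈ genWeightSpace V (χ : L → ℂ) → g m = h m) →
      g = h := by
    intro g h H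
    refine LinearMap.ext fun m => ?_
    have hm : m ∈ (⊤ : Submodule ℂ V) := trivial
    rw [← hspan] at hm
    refine Submodule.iSup_induction (motive := fun m => g m = h m) _ hm (fun χ m hm => H χ m hm) ?_ ?_
    · simp
    · intro m₁ m₂ h₁ h₂; rw [map_add, map_add, h₁, h₂]
  have hinj : Function.Injective
      (Matrix.toLinAlgEquiv'.toAlgHom :
        Matrix (Fin n) (Fin n) ℂ →ₐ[ℂ] Module.End ℂ (Fin n → ℂ)) :=
    Matrix.toLinAlgEquiv'.injective
  have htlm : ∀ M : Matrix (Fin n) (Fin n) ℂ,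
      (Matrix.toLinAlgEquiv'.toAlgHom M : Module.End ℂ (Fin n → ℂ)) = Matrix.toLin' M :=
    fun M => rfl
  refine ⟨?_, ?_, ?_⟩
  · -- diagonalizable
    have hindep : iSupIndep fun χ : Weight ℂ L V =>
        ((genWeightSpace V (χ : L → ℂ) : LieSubmodule ℂ L V) : Submodule ℂ V) := by
      rw [LieSubmodule.iSupIndep_toSubmodule]
      exact iSupIndep_genWeightSpace' ℂ L V
    have hInternal := DirectSum.isInternal_submodule_of_iSupIndep_of_iSup_eq_top hindep hspan
    set bC := fun χ : Weight ℂ L V =>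
      Module.Free.chooseBasis ℂ ((genWeightSpace V (χ : L → ℂ) : LieSubmodule ℂ L V) : Submodule ℂ V)
    set b := hInternal.collectedBasis bC with hb
    have e := b.indexEquiv (Pi.basisFun ℂ (Fin n))
    set b' := b.reindex e with hb'
    set d : Fin n → ℂ := fun i => (e.symm i).1 x + (e.symm i).1 y with hd
    refine aux_diag_of_eigenbasis _ b' d (fun i => ?_)
    have hmem : b' i ∈ genWeightSpace V ((e.symm i).1 : L → ℂ) := by
      rw [hb', Basis.reindex_apply]
      exact hInternal.collectedBasis_mem bC (e.symm i)
    have h1 : Matrix.toLin' Sx (b' i) = (e.symm i).1 x • b' i := hscx _ _ hmem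
    have h2 : Matrix.toLin' Sy (b' i) = (e.symm i).1 y • b' i := hscy _ _ hmem
    have : (Sx + Sy) *ᵥ b' i = Matrix.toLin' Sx (b' i) + Matrix.toLin' Sy (b' i) := by
      rw [Matrix.toLin'_apply, Matrix.toLin'_apply, Matrix.add_mulVec]
    rw [this, h1, h2, hd, add_smul]
  · -- commutes
    apply hinj
    rw [_root_.map_mul, _root_.map_mul]
    apply hext
    intro χ m hm
    have hρm : Matrix.toLin' (ρ (x + y)) m ∈ genWeightSpace V (χ : L → ℂ) := by
      rw [← hlie]
      exact (genWeightSpace V (χ : L → ℂ)).lie_mem hm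
    have hS : ∀ m' : V, m' ∈ genWeightSpace V (χ : L → ℂ) →
        Matrix.toLin' (Sx + Sy) m' = (χ x + χ y) • m' := by
      intro m' hm'
      have : Matrix.toLin' (Sx + Sy) m' = Matrix.toLin' Sx m' + Matrix.toLin' Sy m' := by
        simp [map_add]
      rw [this, hscx _ _ hm', hscy _ _ hm', add_smul]
    rw [Module.End.mul_apply, Module.End.mul_apply, htlm, htlm]
    rw [hS _ hρm, hS _ hm, _root_.map_smul]
  · -- nilpotent
    set K := Module.finrank ℂ (Fin n → ℂ) with hK
    set op : Module.End ℂ (Fin n → ℂ) := Matrix.toLin' (ρ (x + y) - (Sx + Sy)) with hop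
    have hagree : ∀ (χ : Weight ℂ L V) (m : V), m ∈ genWeightSpace V (χ : L → ℂ) →
        op m = (toEnd ℂ L V (x + y) - ((χ x + χ y) • 1 : Module.End ℂ V)) m := by
      intro χ m hm
      have h0 : op m = Matrix.toLin' (ρ (x + y)) m - Matrix.toLin' (Sx + Sy) m := by
        simp [hop, map_sub]
      have h1 : Matrix.toLin' (Sx + Sy) m = (χ x + χ y) • m := by
        have : Matrix.toLin' (Sx + Sy) m = Matrix.toLin' Sx m + Matrix.toLin' Sy m := by
          simp [map_add]
        rw [this, hscx _ _ hm, hscy _ _ hm, add_smul]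
      rw [h0, h1, htoEnd]
      simp only [LinearMap.sub_apply, LinearMap.smul_apply, Module.End.one_apply]
    have hDmem : ∀ (χ : Weight ℂ L V) (m : V), m ∈ genWeightSpace V (χ : L → ℂ) →
        (toEnd ℂ L V (x + y) - ((χ x + χ y) • 1 : Module.End ℂ V)) m
          ∈ genWeightSpace V (χ : L → ℂ) := by
      intro χ m hm
      have h1 : toEnd ℂ L V (x + y) m = ⁅x + y, m⁆ := rfl
      rw [LinearMap.sub_apply, h1]
      exact Submodule.sub_mem _ ((genWeightSpace V (χ : L → ℂ)).lie_mem hm)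
        (Submodule.smul_mem _ _ (by simpa using hm))
    have hpow : ∀ (χ : Weight ℂ L V) (k : ℕ) (m : V), m ∈ genWeightSpace V (χ : L → ℂ) →
        (op ^ k) m = ((toEnd ℂ L V (x + y) - ((χ x + χ y) • 1 : Module.End ℂ V)) ^ k) m ∧
        (op ^ k) m ∈ genWeightSpace V (χ : L → ℂ) := by
      intro χ k
      induction k with
      | zero => intro m hm; simpa using hm
      | succ k ih =>
        intro m hm
        obtain ⟨ih1, ih2⟩ := ih m hm
        constructor
        · have e1 := hagree χ _ ih2
          rw [pow_succ', pow_succ', Module.End.mul_apply, Module.End.mul_apply, e1, ih1]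
        · rw [pow_succ', Module.End.mul_apply, hagree χ _ ih2]
          exact hDmem χ _ ih2
    have hzero : ∀ (χ : Weight ℂ L V) (m : V), m ∈ genWeightSpace V (χ : L → ℂ) →
        ((toEnd ℂ L V (x + y) - ((χ x + χ y) • 1 : Module.End ℂ V)) ^ K) m = 0 := by
      intro χ m hm
      have hc : (χ : L → ℂ) (x + y) = χ x + χ y :=
        LinearWeights.map_add (χ : L → ℂ) χ.genWeightSpace_ne_bot x y
      have h1 := genWeightSpace_le_genWeightSpaceOf V (x + y) (χ : L → ℂ) hm
      rw [mem_genWeightSpaceOf] at h1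
      have h2 : m ∈ (toEnd ℂ L V (x + y)).maxGenEigenspace ((χ : L → ℂ) (x + y)) :=
        (Module.End.mem_maxGenEigenspace _ _ _).mpr h1
      have h3 : m ∈ (toEnd ℂ L V (x + y)).genEigenspace ((χ : L → ℂ) (x + y)) (K : ℕ∞) :=
        Module.End.genEigenspace_le_genEigenspace_finrank _ _ ⊤ h2
      rw [Module.End.mem_genEigenspace_nat] at h3
      rw [← hc]
      exact h3
    have hopK : op ^ K = 0 := by
      apply hext
      intro χ m hm
      rw [(hpow χ K m hm).1, hzero χ m hm]
      simp
    refine ⟨K, ?_⟩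
    apply hinj
    rw [map_pow, map_zero, htlm, ← hop, hopK]
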